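/- Let r and s be integers with s ≥ 3 and r ≥ s+1. Then α_1 = 0, the function τ ↦ α_τ is strictly increasing and differentiable on [1, ∞), and as τ → ∞ one has α_τ → 1, β_τ → 0, γ_τ → 0, and δ_τ → δ_∞ := 1/( 1 + (s−3)/(2κ_4) + √( (s−2)/κ_4 + (s−3)²/(4κ_4²) ) ), which lies in the open interval (0,1). -/

import Mathlib

noncomputable section

/-- `g(x) = x·ln x` (note `g(0) = 0` automatically, since `Real.log 0 = 0`). -/
def xlog (x : ℝ) : ℝ := x * Real.log x

/-- `h(r,s) = (r−2)² + 2(s−2)(r−1)(r−2) + (1/2)(s−2)(s−3)(r−1)²`. -/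
def hRS (r s : ℝ) : ℝ :=
  (r - 2) ^ 2 + 2 * (s - 2) * (r - 1) * (r - 2) + (1 / 2) * (s - 2) * (s - 3) * (r - 1) ^ 2

/-- `κ₁ = (r−1)^{s−2}(r−2)²(s−1)(s−2)^{2(s−2)}` (real exponents, via `rpow`). -/
def kap1 (r s : ℝ) : ℝ := (r - 1) ^ (s - 2) * (r - 2) ^ 2 * (s - 1) * (s - 2) ^ (2 * (s - 2))

/-- `κ₂ = 2h(r,s)/(r−2)²`. -/
def kap2 (r s : ℝ) : ℝ := 2 * hRS r s / (r - 2) ^ 2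

/-- `κ₃ = (rs−r−s)²/h(r,s)`. -/
def kap3 (r s : ℝ) : ℝ := (r * s - r - s) ^ 2 / hRS r s

/-- `κ₄ = (r−3)/(r−2)`. -/
def kap4 (r : ℝ) : ℝ := (r - 3) / (r - 2)

/-- The function `φ` of four real variables `(α,β,γ,δ)` (with parameters `r,s`). -/
def phiRS (r s α β γ δ : ℝ) : ℝ :=
  xlog (1 - α - β) + 2 * (s - 1) * xlog α + ((s - 1) / s) * xlog (r * s - r - s - s * α)
    - xlog (β - γ) - xlog δ - 2 * xlog γ - 2 * xlog (α - β - δ)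
    - xlog ((s - 3) * α + β + δ) - xlog (1 - α - β - γ)
    + α * Real.log (kap1 r s) + β * Real.log (kap2 r s) + γ * Real.log (kap3 r s)
    + δ * Real.log (kap4 r)

/-- Membership in the domain `K = {(α,β,γ,δ) : 0 ≤ γ ≤ β, 0 ≤ δ ≤ α−β, α+β+γ ≤ 1}`. -/
def memK (α β γ δ : ℝ) : Prop :=
  0 ≤ γ ∧ γ ≤ β ∧ 0 ≤ δ ∧ δ ≤ α - β ∧ α + β + γ ≤ 1

/-- `L(r,s) = ln(r−1) + ln(s−1) + ((s−1)(rs−r−s)/s)·ln(1 − s/(rs−r))`;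
the hypothesis `r > ρ(s)` means `r ≥ s+1` and `L(r,s) > 0`. -/
def Lfun (r s : ℝ) : ℝ :=
  Real.log (r - 1) + Real.log (s - 1) +
    ((s - 1) * (r * s - r - s) / s) * Real.log (1 - s / (r * s - r))

end

noncomputable section

/-- `D_τ = (τ−1)² + 2κ₃τ − κ₃`. -/
def DT (r s τ : ℝ) : ℝ := (τ - 1) ^ 2 + 2 * kap3 r s * τ - kap3 r s

/-- `p_τ = ((τ−1)² + κ₃(τ−1))/D_τ`. -/
def pT (r s τ : ℝ) : ℝ := ((τ - 1) ^ 2 + kap3 r s * (τ - 1)) / DT r s τ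

/-- `q_τ = κ₄·τ·(τ−1)²/(κ₂·D_τ)`. -/
def qT (r s τ : ℝ) : ℝ := kap4 r * τ * (τ - 1) ^ 2 / (kap2 r s * DT r s τ)

/-- `N_τ = p_τ + q_τ + ((s−3)/(2κ₄))q_τ + √((s−2)/κ₄·q_τ(p_τ+q_τ) + (s−3)²/(4κ₄²)·q_τ²)`. -/
def NT (r s τ : ℝ) : ℝ :=
  pT r s τ + qT r s τ + ((s - 3) / (2 * kap4 r)) * qT r s τ +
    Real.sqrt (((s - 2) / kap4 r) * qT r s τ * (pT r s τ + qT r s τ) +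
      ((s - 3) ^ 2 / (4 * (kap4 r) ^ 2)) * (qT r s τ) ^ 2)

/-- `α_τ = N_τ/(1+N_τ)`. -/
def alphaT (r s τ : ℝ) : ℝ := NT r s τ / (1 + NT r s τ)

/-- `β_τ = p_τ(1−α_τ)`. -/
def betaT (r s τ : ℝ) : ℝ := pT r s τ * (1 - alphaT r s τ)

/-- `γ_τ = (κ₃(τ−1)/D_τ)(1−α_τ)`. -/
def gammaT (r s τ : ℝ) : ℝ := (kap3 r s * (τ - 1) / DT r s τ) * (1 - alphaT r s τ)

/-- `δ_τ = q_τ(1−α_τ)`. -/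
def deltaT (r s τ : ℝ) : ℝ := qT r s τ * (1 - alphaT r s τ)

end

section Aux
open Filter Topology Set

variable {r s : ℝ}


lemma hRS_pos (hs : 3 ≤ s) (hr : s + 1 ≤ r) : 0 < hRS r s := by
  have h1 : (0:ℝ) ≤ s - 2 := by linarith
  have h2 : (0:ℝ) ≤ s - 3 := by linarith
  have h3 : (0:ℝ) ≤ r - 1 := by linarith
  have h4 : (0:ℝ) < r - 2 := by linarith
  unfold hRS
  nlinarith [mul_nonneg (mul_nonneg h1 h3) h4.le,
    mul_nonneg (mul_nonneg h1 h2) (sq_nonneg (r-1)), pow_pos h4 2]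

lemma kap2_pos (hs : 3 ≤ s) (hr : s + 1 ≤ r) : 0 < kap2 r s := by
  have h := hRS_pos hs hr
  have : (0:ℝ) < (r-2)^2 := by nlinarith
  unfold kap2; positivity

lemma kap3_pos (hs : 3 ≤ s) (hr : s + 1 ≤ r) : 0 < kap3 r s := by
  have h := hRS_pos hs hr
  have h5 : (0:ℝ) < r*s - r - s := by
    nlinarith [mul_nonneg (by linarith : (0:ℝ) ≤ r - 4) (by linarith : (0:ℝ) ≤ s - 1)]
  have : (0:ℝ) < (r*s - r - s)^2 := by positivity
  unfold kap3; positivity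

lemma kap4_pos (hs : 3 ≤ s) (hr : s + 1 ≤ r) : 0 < kap4 r := by
  have h1 : (0:ℝ) < r - 3 := by linarith
  have h2 : (0:ℝ) < r - 2 := by linarith
  unfold kap4; positivity

lemma DT_pos (hk3 : 0 < kap3 r s) {τ : ℝ} (hτ : 1 ≤ τ) : 0 < DT r s τ := by
  unfold DT; nlinarith [sq_nonneg (τ-1)]

lemma pT_nonneg (hk3 : 0 < kap3 r s) {τ : ℝ} (hτ : 1 ≤ τ) : 0 ≤ pT r s τ := by
  unfold pT
  apply div_nonneg _ (DT_pos hk3 hτ).le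
  nlinarith [sq_nonneg (τ-1)]

lemma qT_nonneg (hk2 : 0 < kap2 r s) (hk3 : 0 < kap3 r s) (hk4 : 0 < kap4 r)
    {τ : ℝ} (hτ : 1 ≤ τ) : 0 ≤ qT r s τ := by
  have hD := DT_pos hk3 hτ
  have h1 : (0:ℝ) < τ := by linarith
  unfold qT; positivity

lemma qT_pos (hk2 : 0 < kap2 r s) (hk3 : 0 < kap3 r s) (hk4 : 0 < kap4 r)
    {τ : ℝ} (hτ : 1 < τ) : 0 < qT r s τ := by
  have hD := DT_pos hk3 hτ.le
  have h1 : (0:ℝ) < τ := by linarith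
  have h2 : (0:ℝ) < (τ-1)^2 := by nlinarith
  unfold qT; positivity

lemma pT_lt (hk3 : 0 < kap3 r s) {x y : ℝ} (hx : 1 ≤ x) (hxy : x < y) :
    pT r s x < pT r s y := by
  have hy : (1:ℝ) ≤ y := by linarith
  have hDx := DT_pos hk3 hx
  have hDy := DT_pos hk3 hy
  have hu : (0:ℝ) ≤ x - 1 := by linarith
  have hv : (0:ℝ) < y - 1 := by linarith
  have P : 0 < kap3 r s * (y - x) := mul_pos hk3 (by linarith)
  unfold pT
  rw [div_lt_div_iff₀ hDx hDy]
  unfold DT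
  nlinarith [mul_nonneg (mul_nonneg P.le hu) hv.le, mul_nonneg P.le hu,
    mul_nonneg P.le hv.le, mul_pos P hk3]

lemma qT_lt (hk2 : 0 < kap2 r s) (hk3 : 0 < kap3 r s) (hk4 : 0 < kap4 r)
    {x y : ℝ} (hx : 1 ≤ x) (hxy : x < y) : qT r s x < qT r s y := by
  have hy : (1:ℝ) ≤ y := by linarith
  have hDx := DT_pos hk3 hx
  have hDy := DT_pos hk3 hy
  have hu : (0:ℝ) ≤ x - 1 := by linarith
  have hv : (0:ℝ) < y - 1 := by linarith
  have P : 0 < kap4 r * kap2 r s * (y - x) := mul_pos (mul_pos hk4 hk2) (by linarith)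
  unfold qT
  rw [div_lt_div_iff₀ (by positivity) (by positivity)]
  unfold DT
  nlinarith [mul_nonneg (mul_nonneg (mul_nonneg P.le hu) hu) (mul_nonneg hv.le hv.le),
    mul_nonneg (mul_nonneg (mul_nonneg P.le hk3.le) (mul_nonneg hu hu)) hv.le,
    mul_nonneg (mul_nonneg (mul_nonneg P.le hk3.le) hu) (mul_nonneg hv.le hv.le),
    mul_nonneg (mul_nonneg P.le hk3.le) (mul_nonneg hu hu),
    mul_nonneg (mul_nonneg (mul_nonneg P.le hk3.le) hu) hv.le,
    mul_nonneg (mul_nonneg P.le hk3.le) (mul_nonneg hv.le hv.le),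
    mul_nonneg (mul_nonneg P.le hk3.le) hu,
    mul_pos (mul_pos P hk3) hv]



lemma NT_nonneg (hs3 : 3 ≤ s) (hk2 : 0 < kap2 r s) (hk3 : 0 < kap3 r s) (hk4 : 0 < kap4 r)
    {τ : ℝ} (hτ : 1 ≤ τ) : 0 ≤ NT r s τ := by
  have hp := pT_nonneg hk3 hτ
  have hq := qT_nonneg hk2 hk3 hk4 hτ
  have hc : 0 ≤ (s - 3) / (2 * kap4 r) := div_nonneg (by linarith) (by positivity)
  have := Real.sqrt_nonneg (((s - 2) / kap4 r) * qT r s τ * (pT r s τ + qT r s τ) +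
      ((s - 3) ^ 2 / (4 * (kap4 r) ^ 2)) * (qT r s τ) ^ 2)
  unfold NT
  nlinarith [mul_nonneg hc hq]

lemma NT_lt (hs3 : 3 ≤ s) (hk2 : 0 < kap2 r s) (hk3 : 0 < kap3 r s) (hk4 : 0 < kap4 r)
    {x y : ℝ} (hx : 1 ≤ x) (hxy : x < y) : NT r s x < NT r s y := by
  have hy : (1:ℝ) ≤ y := by linarith
  have hp := pT_lt hk3 hx hxy
  have hq := qT_lt hk2 hk3 hk4 hx hxy
  have hpx := pT_nonneg hk3 hx
  have hqx := qT_nonneg hk2 hk3 hk4 hx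
  have hpy := pT_nonneg hk3 hy
  have hqy := qT_nonneg hk2 hk3 hk4 hy
  have hc : 0 ≤ (s - 3) / (2 * kap4 r) := div_nonneg (by linarith) (by positivity)
  have ha : 0 ≤ (s - 2) / kap4 r := by
    apply div_nonneg (by linarith) hk4.le
  have hb : 0 ≤ (s - 3) ^ 2 / (4 * (kap4 r) ^ 2) := by positivity
  have harg : ((s - 2) / kap4 r) * qT r s x * (pT r s x + qT r s x) +
      ((s - 3) ^ 2 / (4 * (kap4 r) ^ 2)) * (qT r s x) ^ 2 ≤
      ((s - 2) / kap4 r) * qT r s y * (pT r s y + qT r s y) +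
      ((s - 3) ^ 2 / (4 * (kap4 r) ^ 2)) * (qT r s y) ^ 2 := by
    have h1 : qT r s x * (pT r s x + qT r s x) ≤ qT r s y * (pT r s y + qT r s y) :=
      mul_le_mul hq.le (by linarith) (by linarith) (by linarith)
    have h2 : (qT r s x) ^ 2 ≤ (qT r s y) ^ 2 := by nlinarith
    nlinarith [mul_le_mul_of_nonneg_left h1 ha, mul_le_mul_of_nonneg_left h2 hb]
  have hsq := Real.sqrt_le_sqrt harg
  have hcq : ((s - 3) / (2 * kap4 r)) * qT r s x ≤ ((s - 3) / (2 * kap4 r)) * qT r s y :=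
    mul_le_mul_of_nonneg_left hq.le hc
  unfold NT
  linarith

lemma alphaT_strictMono (hs3 : 3 ≤ s) (hk2 : 0 < kap2 r s) (hk3 : 0 < kap3 r s)
    (hk4 : 0 < kap4 r) : StrictMonoOn (alphaT r s) (Set.Ici 1) := by
  intro x hx y hy hxy
  have hNx := NT_nonneg hs3 hk2 hk3 hk4 hx
  have hNy := NT_nonneg hs3 hk2 hk3 hk4 hy
  have hN := NT_lt hs3 hk2 hk3 hk4 hx hxy
  unfold alphaT
  rw [div_lt_div_iff₀ (by linarith) (by linarith)]
  nlinarith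

lemma alphaT_one : alphaT r s 1 = 0 := by
  norm_num [alphaT, NT, pT, qT]



lemma diffAt_pT (hk3 : 0 < kap3 r s) {τ : ℝ} (hτ : 1 ≤ τ) :
    DifferentiableAt ℝ (pT r s) τ := by
  have hD := (DT_pos hk3 hτ).ne'
  simp only [DT] at hD
  have he : pT r s = fun τ => ((τ - 1) ^ 2 + kap3 r s * (τ - 1)) /
      ((τ - 1) ^ 2 + 2 * kap3 r s * τ - kap3 r s) := rfl
  rw [he]
  exact DifferentiableAt.div (by fun_prop) (by fun_prop) hD

lemma diffAt_qT (hk2 : 0 < kap2 r s) (hk3 : 0 < kap3 r s) {τ : ℝ} (hτ : 1 ≤ τ) :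
    DifferentiableAt ℝ (qT r s) τ := by
  have hD : kap2 r s * DT r s τ ≠ 0 := by
    have := DT_pos hk3 hτ; positivity
  simp only [DT] at hD
  have he : qT r s = fun τ => kap4 r * τ * (τ - 1) ^ 2 /
      (kap2 r s * ((τ - 1) ^ 2 + 2 * kap3 r s * τ - kap3 r s)) := rfl
  rw [he]
  exact DifferentiableAt.div (by fun_prop) (by fun_prop) hD

lemma arg_pos (hs3 : 3 ≤ s) (hk2 : 0 < kap2 r s) (hk3 : 0 < kap3 r s) (hk4 : 0 < kap4 r)
    {τ : ℝ} (hτ : 1 < τ) :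
    0 < ((s - 2) / kap4 r) * qT r s τ * (pT r s τ + qT r s τ) +
      ((s - 3) ^ 2 / (4 * (kap4 r) ^ 2)) * (qT r s τ) ^ 2 := by
  have hq := qT_pos hk2 hk3 hk4 hτ
  have hp := pT_nonneg hk3 hτ.le
  have ha : 0 < (s - 2) / kap4 r := div_pos (by linarith) hk4
  have hb : 0 ≤ (s - 3) ^ 2 / (4 * (kap4 r) ^ 2) := by positivity
  nlinarith [mul_pos (mul_pos ha hq) hq, mul_nonneg (mul_nonneg ha.le hq.le) hp,
    mul_nonneg hb (sq_nonneg (qT r s τ))]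

lemma diffAt_NT (hs3 : 3 ≤ s) (hk2 : 0 < kap2 r s) (hk3 : 0 < kap3 r s) (hk4 : 0 < kap4 r)
    {τ : ℝ} (hτ : 1 < τ) : DifferentiableAt ℝ (NT r s) τ := by
  have hP := diffAt_pT hk3 hτ.le
  have hQ := diffAt_qT hk2 hk3 hτ.le
  have hne := (arg_pos hs3 hk2 hk3 hk4 hτ).ne'
  have he : NT r s = fun τ => pT r s τ + qT r s τ + ((s - 3) / (2 * kap4 r)) * qT r s τ +
      Real.sqrt (((s - 2) / kap4 r) * qT r s τ * (pT r s τ + qT r s τ) +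
        ((s - 3) ^ 2 / (4 * (kap4 r) ^ 2)) * (qT r s τ) ^ 2) := rfl
  rw [he]
  exact ((hP.add hQ).add (hQ.const_mul _)).add
    ((((hQ.const_mul _).mul (hP.add hQ)).add ((hQ.pow 2).const_mul _)).sqrt hne)

/-- auxiliary smooth factor -/
noncomputable def HT (r s τ : ℝ) : ℝ :=
  kap4 r * τ * (((s - 2) / kap4 r) * (τ - 1 + kap3 r s) * kap2 r s +
      (((s - 2) / kap4 r) + (s - 3) ^ 2 / (4 * (kap4 r) ^ 2)) * kap4 r * τ * (τ - 1)) /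
    (kap2 r s ^ 2 * (DT r s τ) ^ 2)

lemma arg_eq (hk2 : 0 < kap2 r s) (hk4 : 0 < kap4 r) {τ : ℝ} (hD : DT r s τ ≠ 0) :
    ((s - 2) / kap4 r) * qT r s τ * (pT r s τ + qT r s τ) +
      ((s - 3) ^ 2 / (4 * (kap4 r) ^ 2)) * (qT r s τ) ^ 2 = (τ - 1) ^ 3 * HT r s τ := by
  simp only [pT, qT, HT]
  field_simp
  ring

lemma DT_one : DT r s 1 = kap3 r s := by unfold DT; ring

lemma NT_one_arg : ((s - 2) / kap4 r) * qT r s 1 * (pT r s 1 + qT r s 1) +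
      ((s - 3) ^ 2 / (4 * (kap4 r) ^ 2)) * (qT r s 1) ^ 2 = 0 := by
  norm_num [qT]

lemma hasDeriv_sqrt_arg (hk2 : 0 < kap2 r s) (hk3 : 0 < kap3 r s) (hk4 : 0 < kap4 r) :
    HasDerivWithinAt (fun τ => Real.sqrt (((s - 2) / kap4 r) * qT r s τ * (pT r s τ + qT r s τ) +
      ((s - 3) ^ 2 / (4 * (kap4 r) ^ 2)) * (qT r s τ) ^ 2)) 0 (Set.Ici 1) 1 := by
  rw [hasDerivWithinAt_iff_tendsto_slope]
  have hset : Set.Ici (1:ℝ) \ {1} = Set.Ioi 1 := by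
    ext z; simp [lt_iff_le_and_ne, eq_comm, and_comm]
  rw [hset]
  have hden : kap2 r s ^ 2 * (DT r s 1) ^ 2 ≠ 0 := by
    rw [DT_one]; positivity
  have hHc : ContinuousAt (HT r s) 1 := by
    apply ContinuousAt.div (by fun_prop)
    · simp only [DT]; fun_prop
    · simp only [DT] at hden ⊢; exact hden
  have hlim : Tendsto (fun τ => Real.sqrt ((τ - 1) * HT r s τ)) (𝓝[Set.Ioi 1] 1) (𝓝 0) := by
    have h1 : ContinuousAt (fun τ => (τ - 1) * HT r s τ) 1 :=
      ((continuous_id.sub continuous_const).continuousAt).mul hHc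
    have h2 : Tendsto (fun τ => (τ - 1) * HT r s τ) (𝓝[Set.Ioi 1] 1) (𝓝 0) := by
      have := h1.tendsto.mono_left (nhdsWithin_le_nhds (s := Set.Ioi 1))
      simpa using this
    have := h2.sqrt
    simpa using this
  apply hlim.congr'
  filter_upwards [self_mem_nhdsWithin] with τ hτ
  have hτ1 : (1:ℝ) < τ := hτ
  have hD : DT r s τ ≠ 0 := (DT_pos hk3 hτ1.le).ne'
  rw [slope_def_field]
  rw [NT_one_arg, Real.sqrt_zero]
  rw [arg_eq hk2 hk4 hD]
  have h3 : (τ - 1) ^ 3 * HT r s τ = (τ - 1) ^ 2 * ((τ - 1) * HT r s τ) := by ring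
  rw [h3, Real.sqrt_mul (sq_nonneg _), Real.sqrt_sq (by linarith : (0:ℝ) ≤ τ - 1)]
  rw [eq_div_iff (show (τ:ℝ) - 1 ≠ 0 by intro h; linarith)]
  ring

lemma diffOn_NT (hs3 : 3 ≤ s) (hk2 : 0 < kap2 r s) (hk3 : 0 < kap3 r s) (hk4 : 0 < kap4 r) :
    DifferentiableOn ℝ (NT r s) (Set.Ici 1) := by
  intro x hx
  rcases eq_or_lt_of_le (Set.mem_Ici.mp hx) with h | h
  · subst h
    have h1 := ((diffAt_pT hk3 le_rfl).add (diffAt_qT hk2 hk3 le_rfl)).add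
      ((diffAt_qT hk2 hk3 le_rfl).const_mul ((s - 3) / (2 * kap4 r)))
    have h2 := (hasDeriv_sqrt_arg hk2 hk3 hk4).differentiableWithinAt
    have he : NT r s = fun τ => (pT r s τ + qT r s τ + ((s - 3) / (2 * kap4 r)) * qT r s τ) +
        Real.sqrt (((s - 2) / kap4 r) * qT r s τ * (pT r s τ + qT r s τ) +
          ((s - 3) ^ 2 / (4 * (kap4 r) ^ 2)) * (qT r s τ) ^ 2) := rfl
    rw [he]
    exact h1.differentiableWithinAt.add h2
  · exact (diffAt_NT hs3 hk2 hk3 hk4 h).differentiableWithinAt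

lemma diffOn_alphaT (hs3 : 3 ≤ s) (hk2 : 0 < kap2 r s) (hk3 : 0 < kap3 r s)
    (hk4 : 0 < kap4 r) : DifferentiableOn ℝ (alphaT r s) (Set.Ici 1) := by
  intro x hx
  have hN := diffOn_NT hs3 hk2 hk3 hk4 x hx
  have hpos : 1 + NT r s x ≠ 0 := by
    have := NT_nonneg hs3 hk2 hk3 hk4 hx; linarith
  exact hN.div ((differentiableWithinAt_const 1).add hN) hpos



lemma tendsto_Cdiv (C : ℝ) : Tendsto (fun τ : ℝ => C / τ) atTop (𝓝 0) := by
  simpa [div_eq_mul_inv] using tendsto_inv_atTop_zero.const_mul C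

lemma tendsto_tau_div_DT (hk3 : 0 < kap3 r s) :
    Tendsto (fun τ => τ / DT r s τ) atTop (𝓝 0) := by
  apply tendsto_of_tendsto_of_tendsto_of_le_of_le' tendsto_const_nhds (tendsto_Cdiv 4)
  · filter_upwards [eventually_ge_atTop (2:ℝ)] with τ hτ
    have hD := DT_pos hk3 (by linarith : (1:ℝ) ≤ τ)
    positivity
  · filter_upwards [eventually_ge_atTop (2:ℝ)] with τ hτ
    have hD := DT_pos hk3 (by linarith : (1:ℝ) ≤ τ)
    rw [div_le_div_iff₀ hD (by linarith : (0:ℝ) < τ)]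
    unfold DT
    nlinarith [mul_nonneg hk3.le (by linarith : (0:ℝ) ≤ τ - 2), sq_nonneg (τ - 2)]

lemma tendsto_sub_div_DT (hk3 : 0 < kap3 r s) :
    Tendsto (fun τ => kap3 r s * (τ - 1) / DT r s τ) atTop (𝓝 0) := by
  apply tendsto_of_tendsto_of_tendsto_of_le_of_le' tendsto_const_nhds
    (tendsto_Cdiv (4 * kap3 r s))
  · filter_upwards [eventually_ge_atTop (2:ℝ)] with τ hτ
    have hD := DT_pos hk3 (by linarith : (1:ℝ) ≤ τ)
    have : (0:ℝ) ≤ τ - 1 := by linarith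
    positivity
  · filter_upwards [eventually_ge_atTop (2:ℝ)] with τ hτ
    have hD := DT_pos hk3 (by linarith : (1:ℝ) ≤ τ)
    rw [div_le_div_iff₀ hD (by linarith : (0:ℝ) < τ)]
    unfold DT
    nlinarith [mul_nonneg hk3.le (sq_nonneg (τ - 2)), sq_nonneg (τ - 2),
      mul_nonneg (mul_nonneg hk3.le hk3.le) (by linarith : (0:ℝ) ≤ 2 * τ - 1)]

lemma tendsto_sq_div_DT (hk3 : 0 < kap3 r s) :
    Tendsto (fun τ => (τ - 1) ^ 2 / DT r s τ) atTop (𝓝 1) := by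
  have h0 : Tendsto (fun τ => kap3 r s * (2 * τ - 1) / DT r s τ) atTop (𝓝 0) := by
    apply tendsto_of_tendsto_of_tendsto_of_le_of_le' tendsto_const_nhds
      (tendsto_Cdiv (16 * kap3 r s))
    · filter_upwards [eventually_ge_atTop (2:ℝ)] with τ hτ
      have hD := DT_pos hk3 (by linarith : (1:ℝ) ≤ τ)
      have : (0:ℝ) ≤ 2 * τ - 1 := by linarith
      positivity
    · filter_upwards [eventually_ge_atTop (2:ℝ)] with τ hτ
      have hD := DT_pos hk3 (by linarith : (1:ℝ) ≤ τ)
      rw [div_le_div_iff₀ hD (by linarith : (0:ℝ) < τ)]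
      unfold DT
      nlinarith [mul_nonneg hk3.le (sq_nonneg (τ - 2)),
        mul_nonneg (mul_nonneg hk3.le hk3.le) (by linarith : (0:ℝ) ≤ 2 * τ - 1)]
  have h1 : Tendsto (fun τ => 1 - kap3 r s * (2 * τ - 1) / DT r s τ) atTop (𝓝 1) := by
    simpa using tendsto_const_nhds.sub h0
  apply h1.congr'
  filter_upwards [eventually_ge_atTop (2:ℝ)] with τ hτ
  have hD := (DT_pos hk3 (by linarith : (1:ℝ) ≤ τ)).ne'
  field_simp
  unfold DT
  ring

lemma tendsto_pT (hk3 : 0 < kap3 r s) : Tendsto (pT r s) atTop (𝓝 1) := by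
  have h0 : Tendsto (fun τ => 1 - kap3 r s * (τ / DT r s τ)) atTop (𝓝 1) := by
    simpa using tendsto_const_nhds.sub ((tendsto_tau_div_DT hk3).const_mul (kap3 r s))
  apply h0.congr'
  filter_upwards [eventually_ge_atTop (2:ℝ)] with τ hτ
  have hD := (DT_pos hk3 (by linarith : (1:ℝ) ≤ τ)).ne'
  unfold pT
  field_simp
  unfold DT
  ring

lemma tendsto_qT (hk2 : 0 < kap2 r s) (hk3 : 0 < kap3 r s) (hk4 : 0 < kap4 r) :
    Tendsto (qT r s) atTop atTop := by
  have h1 : Tendsto (fun τ : ℝ => kap4 r / kap2 r s * τ) atTop atTop :=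
    Tendsto.const_mul_atTop (by positivity) tendsto_id
  have h2 := h1.atTop_mul_pos (by norm_num : (0:ℝ) < 1) (tendsto_sq_div_DT hk3)
  apply h2.congr'
  filter_upwards [eventually_ge_atTop (2:ℝ)] with τ hτ
  have hD := (DT_pos hk3 (by linarith : (1:ℝ) ≤ τ)).ne'
  unfold qT
  field_simp

lemma tendsto_NT (hs3 : 3 ≤ s) (hk2 : 0 < kap2 r s) (hk3 : 0 < kap3 r s) (hk4 : 0 < kap4 r) :
    Tendsto (NT r s) atTop atTop := by
  apply tendsto_atTop_mono' _ _ (tendsto_qT hk2 hk3 hk4)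
  filter_upwards [eventually_ge_atTop (1:ℝ)] with τ hτ
  have hp := pT_nonneg hk3 hτ
  have hq := qT_nonneg hk2 hk3 hk4 hτ
  have hc : 0 ≤ (s - 3) / (2 * kap4 r) := div_nonneg (by linarith) (by positivity)
  have hsq := Real.sqrt_nonneg (((s - 2) / kap4 r) * qT r s τ * (pT r s τ + qT r s τ) +
      ((s - 3) ^ 2 / (4 * (kap4 r) ^ 2)) * (qT r s τ) ^ 2)
  unfold NT
  nlinarith [mul_nonneg hc hq]

lemma tendsto_one_sub_alphaT (hs3 : 3 ≤ s) (hk2 : 0 < kap2 r s) (hk3 : 0 < kap3 r s)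
    (hk4 : 0 < kap4 r) : Tendsto (fun τ => 1 - alphaT r s τ) atTop (𝓝 0) := by
  have h1 : Tendsto (fun τ => (1 + NT r s τ)⁻¹) atTop (𝓝 0) :=
    (tendsto_atTop_add_const_left _ 1 (tendsto_NT hs3 hk2 hk3 hk4)).inv_tendsto_atTop
  apply h1.congr'
  filter_upwards [eventually_ge_atTop (1:ℝ)] with τ hτ
  have hN : (0:ℝ) < 1 + NT r s τ := by
    have := NT_nonneg hs3 hk2 hk3 hk4 hτ; linarith
  unfold alphaT
  field_simp
  ring

lemma tendsto_alphaT (hs3 : 3 ≤ s) (hk2 : 0 < kap2 r s) (hk3 : 0 < kap3 r s)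
    (hk4 : 0 < kap4 r) : Tendsto (alphaT r s) atTop (𝓝 1) := by
  have h : Tendsto (fun τ => 1 - (1 - alphaT r s τ)) atTop (𝓝 (1 - 0)) :=
    tendsto_const_nhds.sub (tendsto_one_sub_alphaT hs3 hk2 hk3 hk4)
  simpa using h

lemma tendsto_betaT (hs3 : 3 ≤ s) (hk2 : 0 < kap2 r s) (hk3 : 0 < kap3 r s)
    (hk4 : 0 < kap4 r) : Tendsto (betaT r s) atTop (𝓝 0) := by
  have := (tendsto_pT hk3).mul (tendsto_one_sub_alphaT hs3 hk2 hk3 hk4)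
  simpa using (show Tendsto (betaT r s) atTop (𝓝 (1 * 0)) from this)

lemma tendsto_gammaT (hs3 : 3 ≤ s) (hk2 : 0 < kap2 r s) (hk3 : 0 < kap3 r s)
    (hk4 : 0 < kap4 r) : Tendsto (gammaT r s) atTop (𝓝 0) := by
  have := (tendsto_sub_div_DT hk3).mul (tendsto_one_sub_alphaT hs3 hk2 hk3 hk4)
  simpa using (show Tendsto (gammaT r s) atTop (𝓝 (0 * 0)) from this)

lemma tendsto_deltaT (hs3 : 3 ≤ s) (hk2 : 0 < kap2 r s) (hk3 : 0 < kap3 r s)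
    (hk4 : 0 < kap4 r) :
    Tendsto (deltaT r s) atTop (𝓝 (1 / (1 + (s - 3) / (2 * kap4 r) +
      Real.sqrt ((s - 2) / kap4 r + (s - 3) ^ 2 / (4 * (kap4 r) ^ 2))))) := by
  set a := (s - 2) / kap4 r with ha_def
  set b := (s - 3) ^ 2 / (4 * (kap4 r) ^ 2) with hb_def
  set c := (s - 3) / (2 * kap4 r) with hc_def
  have ha : 0 < a := div_pos (by linarith) hk4
  have hb : 0 ≤ b := by positivity
  have hc : 0 ≤ c := div_nonneg (by linarith) (by positivity)
  have hqi : Tendsto (fun τ => (qT r s τ)⁻¹) atTop (𝓝 0) :=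
    (tendsto_qT hk2 hk3 hk4).inv_tendsto_atTop
  have hpq : Tendsto (fun τ => pT r s τ * (qT r s τ)⁻¹) atTop (𝓝 0) := by
    have := (tendsto_pT hk3).mul hqi
    simpa using this
  have hsq : Tendsto (fun τ => Real.sqrt (a * (pT r s τ * (qT r s τ)⁻¹) + a + b)) atTop
      (𝓝 (Real.sqrt (a + b))) := by
    have h1 : Tendsto (fun τ => a * (pT r s τ * (qT r s τ)⁻¹) + a + b) atTop (𝓝 (a + b)) := by
      have := (hpq.const_mul a).add_const a
      have h2 := this.add_const b
      simpa using h2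
    have := h1.sqrt
    simpa using this
  have hG : Tendsto (fun τ => (qT r s τ)⁻¹ + pT r s τ * (qT r s τ)⁻¹ + 1 + c +
      Real.sqrt (a * (pT r s τ * (qT r s τ)⁻¹) + a + b)) atTop (𝓝 (1 + c + Real.sqrt (a + b))) := by
    have := (((hqi.add hpq).add_const 1).add_const c).add hsq
    simpa [add_assoc, add_comm, add_left_comm] using this
  have hTpos : 0 < 1 + c + Real.sqrt (a + b) := by
    have := Real.sqrt_nonneg (a + b); linarith
  have hfinal := hG.inv₀ hTpos.ne'
  rw [one_div]
  apply hfinal.congr'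
  filter_upwards [eventually_gt_atTop (1:ℝ)] with τ hτ
  have hq := qT_pos hk2 hk3 hk4 hτ
  have hp := pT_nonneg hk3 hτ.le
  have hN := NT_nonneg hs3 hk2 hk3 hk4 hτ.le
  have hsqrt_nn := Real.sqrt_nonneg (a * (pT r s τ * (qT r s τ)⁻¹) + a + b)
  set G := (qT r s τ)⁻¹ + pT r s τ * (qT r s τ)⁻¹ + 1 + c +
      Real.sqrt (a * (pT r s τ * (qT r s τ)⁻¹) + a + b) with hG_def
  have hGpos : 0 < G := by
    have h1 : 0 < (qT r s τ)⁻¹ := by positivity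
    have h2 : 0 ≤ pT r s τ * (qT r s τ)⁻¹ := by positivity
    rw [hG_def]; linarith
  have harg : a * qT r s τ * (pT r s τ + qT r s τ) + b * (qT r s τ) ^ 2 =
      (qT r s τ) ^ 2 * (a * (pT r s τ * (qT r s τ)⁻¹) + a + b) := by
    field_simp
  have hsqeq : Real.sqrt (a * qT r s τ * (pT r s τ + qT r s τ) + b * (qT r s τ) ^ 2) =
      qT r s τ * Real.sqrt (a * (pT r s τ * (qT r s τ)⁻¹) + a + b) := by
    rw [harg, Real.sqrt_mul (sq_nonneg _), Real.sqrt_sq hq.le]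
  have hNG : 1 + NT r s τ = qT r s τ * G := by
    unfold NT
    rw [← ha_def, ← hb_def, ← hc_def, hsqeq, hG_def]
    field_simp
    ring
  have h1a : 1 - alphaT r s τ = (1 + NT r s τ)⁻¹ := by
    unfold alphaT
    have : (0:ℝ) < 1 + NT r s τ := by linarith
    field_simp
    ring
  show G⁻¹ = deltaT r s τ
  unfold deltaT
  rw [h1a, hNG, mul_inv]
  field_simp

lemma delta_inf_pos (hs3 : 3 ≤ s) (hk4 : 0 < kap4 r) :
    0 < 1 / (1 + (s - 3) / (2 * kap4 r) +
      Real.sqrt ((s - 2) / kap4 r + (s - 3) ^ 2 / (4 * (kap4 r) ^ 2))) := by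
  have hc : 0 ≤ (s - 3) / (2 * kap4 r) := div_nonneg (by linarith) (by positivity)
  have := Real.sqrt_nonneg ((s - 2) / kap4 r + (s - 3) ^ 2 / (4 * (kap4 r) ^ 2))
  have hT : 0 < 1 + (s - 3) / (2 * kap4 r) +
      Real.sqrt ((s - 2) / kap4 r + (s - 3) ^ 2 / (4 * (kap4 r) ^ 2)) := by linarith
  positivity

lemma delta_inf_lt_one (hs3 : 3 ≤ s) (hk4 : 0 < kap4 r) :
    1 / (1 + (s - 3) / (2 * kap4 r) +
      Real.sqrt ((s - 2) / kap4 r + (s - 3) ^ 2 / (4 * (kap4 r) ^ 2))) < 1 := by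
  have hc : 0 ≤ (s - 3) / (2 * kap4 r) := div_nonneg (by linarith) (by positivity)
  have ha : 0 < (s - 2) / kap4 r := div_pos (by linarith) hk4
  have hb : 0 ≤ (s - 3) ^ 2 / (4 * (kap4 r) ^ 2) := by positivity
  have hsq : 0 < Real.sqrt ((s - 2) / kap4 r + (s - 3) ^ 2 / (4 * (kap4 r) ^ 2)) :=
    Real.sqrt_pos.mpr (by linarith)
  rw [div_lt_one (by linarith)]
  linarith

end Aux

/-- For integers `s ≥ 3` and `r ≥ s+1`: `α₁ = 0`; the function `τ ↦ α_τ` is strictly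
increasing and differentiable on `[1,∞)`; and as `τ → ∞`, `α_τ → 1`, `β_τ → 0`,
`γ_τ → 0` and `δ_τ → δ_∞ := 1/(1 + (s−3)/(2κ₄) + √((s−2)/κ₄ + (s−3)²/(4κ₄²)))`,
which lies in `(0,1)`. -/
theorem stmt_16 (r s : ℤ) (hs : 3 ≤ s) (hr : s + 1 ≤ r) :
    alphaT r s 1 = 0 ∧
    StrictMonoOn (alphaT r s) (Set.Ici 1) ∧
    DifferentiableOn ℝ (alphaT r s) (Set.Ici 1) ∧
    Filter.Tendsto (alphaT r s) Filter.atTop (nhds 1) ∧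
    Filter.Tendsto (betaT r s) Filter.atTop (nhds 0) ∧
    Filter.Tendsto (gammaT r s) Filter.atTop (nhds 0) ∧
    Filter.Tendsto (deltaT r s) Filter.atTop
      (nhds (1 / (1 + ((s : ℝ) - 3) / (2 * kap4 r) +
        Real.sqrt (((s : ℝ) - 2) / kap4 r + ((s : ℝ) - 3) ^ 2 / (4 * (kap4 r) ^ 2))))) ∧
    0 < 1 / (1 + ((s : ℝ) - 3) / (2 * kap4 r) +
        Real.sqrt (((s : ℝ) - 2) / kap4 r + ((s : ℝ) - 3) ^ 2 / (4 * (kap4 r) ^ 2))) ∧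
    1 / (1 + ((s : ℝ) - 3) / (2 * kap4 r) +
        Real.sqrt (((s : ℝ) - 2) / kap4 r + ((s : ℝ) - 3) ^ 2 / (4 * (kap4 r) ^ 2))) < 1 := by
  have hs' : (3:ℝ) ≤ (s:ℝ) := by exact_mod_cast hs
  have hr' : (s:ℝ) + 1 ≤ (r:ℝ) := by exact_mod_cast hr
  have hk2 := kap2_pos hs' hr'
  have hk3 := kap3_pos hs' hr'
  have hk4 := kap4_pos hs' hr'
  exact ⟨alphaT_one, alphaT_strictMono hs' hk2 hk3 hk4, diffOn_alphaT hs' hk2 hk3 hk4,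
    tendsto_alphaT hs' hk2 hk3 hk4, tendsto_betaT hs' hk2 hk3 hk4,
    tendsto_gammaT hs' hk2 hk3 hk4, tendsto_deltaT hs' hk2 hk3 hk4,
    delta_inf_pos hs' hk4, delta_inf_lt_one hs' hk4⟩
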